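/- The LCSk recursive rule is correct: for 1 ≤ i,j ≤ n-k+1, LCSk_{i,j} = max( LCSk_{i,j-1}, LCSk_{i-1,j}, LCSk_{i-k,j-k} + kMatch(i,j) ), where LCSk_{x,y} is defined to be 0 whenever x ≤ 0 or y ≤ 0. -/

import Mathlib

/-- `c` is a valid chain of non-overlapping `k`-matchings between `A` and `B`
(0-based starting indices). -/
def IsKChain {α : Type*} (A B : List α) (k : ℕ) (c : List (ℕ × ℕ)) : Prop :=
  c.Chain' (fun p q => p.1 + k ≤ q.1 ∧ p.2 + k ≤ q.2) ∧
  ∀ p ∈ c, p.1 + k ≤ A.length ∧ p.2 + k ≤ B.length ∧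
    ∀ f < k, A[p.1 + f]? = B[p.2 + f]?

/-- `LCSk A B k`: maximal number of order-preserving non-overlapping common
`k`-length substrings. -/
noncomputable def LCSk {α : Type*} (A B : List α) (k : ℕ) : ℕ :=
  sSup {l | ∃ c, IsKChain A B k c ∧ c.length = l}

/-- Classical longest common subsequence length. -/
noncomputable def LCS {α : Type*} (A B : List α) : ℕ :=
  sSup {l | ∃ C : List α, C.Sublist A ∧ C.Sublist B ∧ C.length = l}

open Classical in
/-- `kMatch A B k i j` (1-based `i`,`j`): `1` if `a_{i+f} = b_{j+f}` for all
`0 ≤ f ≤ k-1` (within bounds), `0` otherwise. -/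
noncomputable def kMatch {α : Type*} (A B : List α) (k i j : ℕ) : ℕ :=
  if 1 ≤ i ∧ 1 ≤ j ∧ i + k - 1 ≤ A.length ∧ j + k - 1 ≤ B.length ∧
      ∀ f < k, A[i - 1 + f]? = B[j - 1 + f]? then 1 else 0

/-- The LCSk dynamic-programming table (1-based `i`,`j`):
`LCSk` of the prefixes `A[1..i+k-1]` and `B[1..j+k-1]` (so that matched
substrings of `A` start at indices `≤ i` and of `B` at indices `≤ j`);
the value is `0` whenever `i = 0` or `j = 0`. -/
noncomputable def LCSkT {α : Type*} (A B : List α) (k i j : ℕ) : ℕ :=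
  if i = 0 ∨ j = 0 then 0
  else LCSk (A.take (i + k - 1)) (B.take (j + k - 1)) k

section Aux

variable {α : Type*}

lemma kMatch_eq_zero_or_one (A B : List α) (k i j : ℕ) :
    kMatch A B k i j = 0 ∨ kMatch A B k i j = 1 := by
  rw [kMatch]; split
  · exact Or.inr rfl
  · exact Or.inl rfl

lemma kchain_pairwise {k : ℕ} {c : List (ℕ × ℕ)}
    (hc : c.Chain' (fun p q => p.1 + k ≤ q.1 ∧ p.2 + k ≤ q.2)) :
    c.Pairwise (fun p q => p.1 + k ≤ q.1 ∧ p.2 + k ≤ q.2) := by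
  have : IsTrans (ℕ × ℕ) (fun p q => p.1 + k ≤ q.1 ∧ p.2 + k ≤ q.2) :=
    ⟨fun a b c h1 h2 => ⟨by omega, by omega⟩⟩
  exact List.isChain_iff_pairwise.mp hc

lemma isKChain_length_le {A B : List α} {k : ℕ} (hk : 1 ≤ k) {c : List (ℕ × ℕ)}
    (h : IsKChain A B k c) : c.length ≤ A.length := by
  have hpw := kchain_pairwise h.1
  have hnd : (c.map Prod.fst).Nodup := by
    refine List.Pairwise.nodup (r := (· < ·)) ?_
    refine (List.pairwise_map).mpr (hpw.imp ?_)
    intro a b hab; omega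
  have hsub : (c.map Prod.fst) ⊆ List.range A.length := by
    intro x hx
    obtain ⟨p, hp, rfl⟩ := List.mem_map.mp hx
    have := (h.2 p hp).1
    exact List.mem_range.mpr (by omega)
  have := (List.subperm_of_subset hnd hsub).length_le
  simpa using this

lemma lcsk_set_nonempty (A B : List α) (k : ℕ) :
    {l | ∃ c, IsKChain A B k c ∧ c.length = l}.Nonempty :=
  ⟨0, [], ⟨List.isChain_nil, by simp⟩, rfl⟩

lemma lcsk_bddAbove (A B : List α) {k : ℕ} (hk : 1 ≤ k) :
    BddAbove {l | ∃ c, IsKChain A B k c ∧ c.length = l} := by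
  refine ⟨A.length, ?_⟩
  rintro l ⟨c, hc, rfl⟩
  exact isKChain_length_le hk hc

lemma le_lcsk {A B : List α} {k : ℕ} (hk : 1 ≤ k) {c : List (ℕ × ℕ)}
    (h : IsKChain A B k c) : c.length ≤ LCSk A B k :=
  le_csSup (lcsk_bddAbove A B hk) ⟨c, h, rfl⟩

lemma lcsk_le {A B : List α} {k N : ℕ}
    (h : ∀ c, IsKChain A B k c → c.length ≤ N) : LCSk A B k ≤ N :=
  csSup_le (lcsk_set_nonempty A B k) (by rintro l ⟨c, hc, rfl⟩; exact h c hc)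

lemma exists_lcsk_chain (A B : List α) {k : ℕ} (hk : 1 ≤ k) :
    ∃ c, IsKChain A B k c ∧ c.length = LCSk A B k :=
  Nat.sSup_mem (lcsk_set_nonempty A B k) (lcsk_bddAbove A B hk)

/-- Transfer chains between the original lists and prefixes. -/
lemma isKChain_take_iff {A B : List α} {k mA mB : ℕ} {c : List (ℕ × ℕ)} :
    IsKChain (A.take mA) (B.take mB) k c ↔
      IsKChain A B k c ∧ ∀ p ∈ c, p.1 + k ≤ mA ∧ p.2 + k ≤ mB := by
  constructor
  · rintro ⟨hch, hval⟩
    have hlenA : (A.take mA).length = min mA A.length := by simp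
    have hlenB : (B.take mB).length = min mB B.length := by simp
    refine ⟨⟨hch, fun p hp => ?_⟩, fun p hp => ?_⟩
    · obtain ⟨h1, h2, h3⟩ := hval p hp
      rw [hlenA] at h1; rw [hlenB] at h2
      refine ⟨by omega, by omega, fun f hf => ?_⟩
      have e1 : (A.take mA)[p.1 + f]? = A[p.1 + f]? := by
        rw [List.getElem?_take]; rw [if_pos (by omega)]
      have e2 : (B.take mB)[p.2 + f]? = B[p.2 + f]? := by
        rw [List.getElem?_take]; rw [if_pos (by omega)]
      rw [← e1, ← e2]; exact h3 f hf
    · obtain ⟨h1, h2, _⟩ := hval p hp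
      rw [hlenA] at h1; rw [hlenB] at h2
      exact ⟨by omega, by omega⟩
  · rintro ⟨⟨hch, hval⟩, hbd⟩
    refine ⟨hch, fun p hp => ?_⟩
    obtain ⟨h1, h2, h3⟩ := hval p hp
    obtain ⟨h4, h5⟩ := hbd p hp
    refine ⟨by simp; omega, by simp; omega, fun f hf => ?_⟩
    have e1 : (A.take mA)[p.1 + f]? = A[p.1 + f]? := by
      rw [List.getElem?_take]; rw [if_pos (by omega)]
    have e2 : (B.take mB)[p.2 + f]? = B[p.2 + f]? := by
      rw [List.getElem?_take]; rw [if_pos (by omega)]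
    rw [e1, e2]; exact h3 f hf

end Aux

/-- the LCSk recursive rule
`LCSk_{i,j} = max(LCSk_{i,j-1}, LCSk_{i-1,j}, LCSk_{i-k,j-k} + kMatch(i,j))`
(natural subtraction gives the convention `LCSk_{x,y} = 0` for `x ≤ 0` or `y ≤ 0`). -/
theorem lcsk_recursive_rule {α : Type*} (A B : List α) (n k i j : ℕ)
    (hk : 1 ≤ k) (hA : A.length = n) (hB : B.length = n)
    (hi1 : 1 ≤ i) (hi2 : i ≤ n - k + 1) (hj1 : 1 ≤ j) (hj2 : j ≤ n - k + 1)
    (hkn : k ≤ n) :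
    LCSkT A B k i j =
      max (LCSkT A B k i (j - 1))
        (max (LCSkT A B k (i - 1) j)
          (LCSkT A B k (i - k) (j - k) + kMatch A B k i j)) := by
  have hin : i + k - 1 ≤ n := by omega
  have hjn : j + k - 1 ≤ n := by omega
  -- generic facts about T
  have hT : ∀ x y, 1 ≤ x → 1 ≤ y →
      LCSkT A B k x y = LCSk (A.take (x + k - 1)) (B.take (y + k - 1)) k := by
    intro x y hx hy
    rw [LCSkT, if_neg (by omega)]
  -- a chain witnessing T x y, characterized over the full lists
  have hTchain : ∀ x y, 1 ≤ x → 1 ≤ y →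
      ∃ c, (IsKChain A B k c ∧ ∀ p ∈ c, p.1 + k ≤ x + k - 1 ∧ p.2 + k ≤ y + k - 1) ∧
        c.length = LCSkT A B k x y := by
    intro x y hx hy
    rw [hT x y hx hy]
    obtain ⟨c, hc, hlen⟩ := exists_lcsk_chain (A.take (x + k - 1)) (B.take (y + k - 1)) hk
    exact ⟨c, isKChain_take_iff.mp hc, hlen⟩
  have hTle : ∀ x y, 1 ≤ x → 1 ≤ y → ∀ c, IsKChain A B k c →
      (∀ p ∈ c, p.1 + k ≤ x + k - 1 ∧ p.2 + k ≤ y + k - 1) →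
      c.length ≤ LCSkT A B k x y := by
    intro x y hx hy c hc hbd
    rw [hT x y hx hy]
    exact le_lcsk hk (isKChain_take_iff.mpr ⟨hc, hbd⟩)
  apply le_antisymm
  · -- upper bound
    rw [hT i j hi1 hj1]
    apply lcsk_le
    intro c hc
    obtain ⟨⟨hch, hval⟩, hbd⟩ := isKChain_take_iff.mp hc
    rcases List.eq_nil_or_concat c with rfl | ⟨l, p, rfl⟩
    · simp
    rw [List.concat_eq_append] at *
    have hpmem : p ∈ l ++ [p] := by simp
    have hpbd := hbd p hpmem
    have hpw := kchain_pairwise hch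
    have hlp : ∀ q ∈ l, q.1 + k ≤ p.1 ∧ q.2 + k ≤ p.2 := by
      intro q hq
      exact (List.pairwise_append.mp hpw).2.2 q hq p (by simp)
    have hp1 : p.1 + 1 ≤ i := by omega
    have hp2 : p.2 + 1 ≤ j := by omega
    by_cases hcase1 : p.1 + 1 < i
    · -- fits in T (i-1) j
      have h1 : 1 ≤ i - 1 := by omega
      have : (l ++ [p]).length ≤ LCSkT A B k (i - 1) j := by
        apply hTle (i-1) j h1 hj1 _ ⟨hch, hval⟩
        intro q hq
        rcases List.mem_append.mp hq with hq | hq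
        · have := hlp q hq; have := hbd q (by simp [hq]); constructor <;> omega
        · simp at hq; subst hq; constructor <;> omega
      omega
    by_cases hcase2 : p.2 + 1 < j
    · have h1 : 1 ≤ j - 1 := by omega
      have : (l ++ [p]).length ≤ LCSkT A B k i (j - 1) := by
        apply hTle i (j-1) hi1 h1 _ ⟨hch, hval⟩
        intro q hq
        rcases List.mem_append.mp hq with hq | hq
        · have := hlp q hq; have := hbd q (by simp [hq]); constructor <;> omega
        · simp at hq; subst hq; constructor <;> omega
      omega
    · -- p = (i-1, j-1); diagonal case
      have hpi : p.1 = i - 1 := by omega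
      have hpj : p.2 = j - 1 := by omega
      have hpv := hval p hpmem
      have hkm : kMatch A B k i j = 1 := by
        rw [kMatch, if_pos]
        refine ⟨hi1, hj1, by omega, by omega, fun f hf => ?_⟩
        have := hpv.2.2 f hf
        rwa [hpi, hpj] at this
      have hlchain : l.Chain' (fun p q => p.1 + k ≤ q.1 ∧ p.2 + k ≤ q.2) :=
        (List.isChain_append.mp hch).1
      have hllen : l.length ≤ LCSkT A B k (i - k) (j - k) := by
        rcases l with _ | ⟨q0, l'⟩
        · simp
        · have hq0 := hlp q0 (by simp)
          have hik : 1 ≤ i - k := by omega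
          have hjk : 1 ≤ j - k := by omega
          apply hTle (i-k) (j-k) hik hjk _
            ⟨hlchain, fun q hq => hval q (List.mem_append_left _ hq)⟩
          intro q hq
          have := hlp q hq
          constructor <;> omega
      have : (l ++ [p]).length = l.length + 1 := by simp
      omega
  · -- lower bound: three inequalities
    rw [max_le_iff, max_le_iff]
    refine ⟨?_, ?_, ?_⟩
    · -- T i (j-1) ≤ T i j
      rcases Nat.eq_zero_or_pos (j - 1) with h0 | h1
      · rw [LCSkT, if_pos (by omega)]; exact Nat.zero_le _
      · obtain ⟨c, ⟨hc, hbd⟩, hlen⟩ := hTchain i (j-1) hi1 h1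
        rw [← hlen]
        apply hTle i j hi1 hj1 c hc
        intro q hq; have := hbd q hq; constructor <;> omega
    · rcases Nat.eq_zero_or_pos (i - 1) with h0 | h1
      · rw [LCSkT, if_pos (by omega)]; exact Nat.zero_le _
      · obtain ⟨c, ⟨hc, hbd⟩, hlen⟩ := hTchain (i-1) j h1 hj1
        rw [← hlen]
        apply hTle i j hi1 hj1 c hc
        intro q hq; have := hbd q hq; constructor <;> omega
    · -- diagonal
      by_cases hkm : kMatch A B k i j = 1
      · -- get a chain for (i-k, j-k), possibly empty
        have hmatch : ∀ f < k, A[i - 1 + f]? = B[j - 1 + f]? := by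
          rw [kMatch] at hkm
          split at hkm
          · next h => exact h.2.2.2.2
          · simp at hkm
        obtain ⟨l, hl, hlbd, hllen⟩ :
            ∃ l, IsKChain A B k l ∧ (∀ q ∈ l, q.1 + k ≤ i - 1 ∧ q.2 + k ≤ j - 1) ∧
              l.length = LCSkT A B k (i - k) (j - k) := by
          rcases Nat.eq_zero_or_pos (i - k) with h0 | hik
          · exact ⟨[], ⟨List.isChain_nil, by simp⟩, by simp,
              by rw [LCSkT, if_pos (by omega)]; rfl⟩
          rcases Nat.eq_zero_or_pos (j - k) with h0 | hjk
          · exact ⟨[], ⟨List.isChain_nil, by simp⟩, by simp,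
              by rw [LCSkT, if_pos (by omega)]; rfl⟩
          obtain ⟨l, ⟨hl, hbd⟩, hlen⟩ := hTchain (i-k) (j-k) hik hjk
          exact ⟨l, hl, fun q hq => by have := hbd q hq; constructor <;> omega, hlen⟩
        -- extend with the new pair
        have hnew : IsKChain A B k (l ++ [(i-1, j-1)]) := by
          constructor
          · change List.IsChain _ (l ++ _)
            rw [List.isChain_append]
            refine ⟨hl.1, List.isChain_singleton _, ?_⟩
            intro x hx y hy
            simp at hy; subst hy
            have hxmem : x ∈ l := List.mem_of_mem_getLast? hx
            have := hlbd x hxmem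
            exact ⟨by omega, by omega⟩
          · intro q hq
            rcases List.mem_append.mp hq with hq | hq
            · exact hl.2 q hq
            · simp at hq; subst hq
              exact ⟨by omega, by omega, hmatch⟩
        have : (l ++ [(i-1,j-1)]).length ≤ LCSkT A B k i j := by
          apply hTle i j hi1 hj1 _ hnew
          intro q hq
          rcases List.mem_append.mp hq with hq | hq
          · have := hlbd q hq; constructor <;> omega
          · simp at hq; subst hq; constructor <;> omega
        simp at this
        omega
      · -- kMatch = 0
        have hkm0 : kMatch A B k i j = 0 := by
          rcases kMatch_eq_zero_or_one A B k i j with h | h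
          · exact h
          · exact absurd h hkm
        rw [hkm0, Nat.add_zero]
        rcases Nat.eq_zero_or_pos (i - k) with h0 | hik
        · rw [LCSkT, if_pos (by omega)]; exact Nat.zero_le _
        rcases Nat.eq_zero_or_pos (j - k) with h0 | hjk
        · rw [LCSkT, if_pos (by omega)]; exact Nat.zero_le _
        obtain ⟨c, ⟨hc, hbd⟩, hlen⟩ := hTchain (i-k) (j-k) hik hjk
        rw [← hlen]
        apply hTle i j hi1 hj1 c hc
        intro q hq; have := hbd q hq; constructor <;> omega
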